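/- Over 𝔽₂, the cubic threefold X = V₊(f) ⊂ ℙ⁴ with f = x₃²x₀ + x₃x₄x₁ + x₄²x₂ + x₃(x₀² + x₁²) + x₄(x₁² + x₂²) + x₀x₂² + x₂x₀² is smooth, i.e. there is no point of ℙ⁴ over the algebraic closure of 𝔽₂ at which f and all its partial derivatives vanish simultaneously. -/
import Mathlib


open MvPolynomial

/-- The cubic form `f = x₃²x₀ + x₃x₄x₁ + x₄²x₂ + x₃(x₀² + x₁²) + x₄(x₁² + x₂²)
+ x₀x₂² + x₂x₀²` over `𝔽₂`. -/
noncomputable def fermatLikeCubic : MvPolynomial (Fin 5) (ZMod 2) :=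
  X 3 ^ 2 * X 0 + X 3 * X 4 * X 1 + X 4 ^ 2 * X 2 +
    X 3 * (X 0 ^ 2 + X 1 ^ 2) + X 4 * (X 1 ^ 2 + X 2 ^ 2) +
    X 0 * X 2 ^ 2 + X 2 * X 0 ^ 2

/-- The cubic threefold `V₊(f) ⊂ ℙ⁴` over `𝔽₂`, with
`f = x₃²x₀ + x₃x₄x₁ + x₄²x₂ + x₃(x₀² + x₁²) + x₄(x₁² + x₂²) + x₀x₂² + x₂x₀²`,
is smooth: there is no nonzero point over the algebraic closure of `𝔽₂` at which `f`
and all of its partial derivatives vanish simultaneously (Jacobian criterion). -/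
theorem fermatLikeCubic_smooth :
    ∀ a : Fin 5 → AlgebraicClosure (ZMod 2), a ≠ 0 →
      ¬ (MvPolynomial.aeval a fermatLikeCubic = 0 ∧
          ∀ i : Fin 5, MvPolynomial.aeval a (MvPolynomial.pderiv i fermatLikeCubic) = 0) := by
  intro a ha ⟨hf, hd⟩
  have h2 : (2 : AlgebraicClosure (ZMod 2)) = 0 := by
    exact_mod_cast CharP.cast_eq_zero (AlgebraicClosure (ZMod 2)) 2
  have h0 := hd 0
  have h1 := hd 1
  have h2' := hd 2
  have h3 := hd 3
  have h4 := hd 4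
  simp [fermatLikeCubic, pderiv_mul, pderiv_pow, pderiv_X, Pi.single_apply, map_natCast, h2]
    at h0 h1 h2' h3 h4
  have sq : ∀ x y : AlgebraicClosure (ZMod 2), x ^ 2 + y ^ 2 = 0 → x = y := by
    intro x y h
    have hs : (x + y) ^ 2 = 0 := by linear_combination h + x * y * h2
    have hxy : x + y = 0 := by
      exact pow_eq_zero_iff (two_ne_zero) |>.mp hs
    linear_combination hxy - y * h2
  have sq0 : ∀ x : AlgebraicClosure (ZMod 2), x ^ 2 = 0 → x = 0 := by
    intro x h; exact pow_eq_zero_iff (two_ne_zero) |>.mp h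
  have e32 : a 3 = a 2 := sq _ _ h0
  have e40 : a 4 = a 0 := sq _ _ h2'
  have hall : a 0 = 0 ∧ a 1 = 0 ∧ a 2 = 0 ∧ a 3 = 0 ∧ a 4 = 0 := by
    rcases h1 with h1 | h1
    · have ha2 : a 2 = 0 := e32 ▸ h1
      have ha1 : a 1 = 0 := sq0 _ (by linear_combination h4 - a 1 * h1 - a 2 * ha2)
      have ha0 : a 0 = 0 := sq0 _ (by linear_combination h3 - a 4 * ha1 - a 1 * ha1)
      exact ⟨ha0, ha1, ha2, h1, e40.trans ha0⟩
    · have ha0 : a 0 = 0 := e40.symm.trans h1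
      have ha1 : a 1 = 0 := sq0 _ (by linear_combination h3 - a 1 * h1 - a 0 * ha0)
      have ha2 : a 2 = 0 := sq0 _ (by linear_combination h4 - a 3 * ha1 - a 1 * ha1)
      exact ⟨ha0, ha1, ha2, e32.trans ha2, h1⟩
  apply ha
  funext i
  fin_cases i <;> simp [hall.1, hall.2.1, hall.2.2.1, hall.2.2.2.1, hall.2.2.2.2]
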